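/- The number of equivalence classes of 3-variable Boolean functions under the relation f ~ h iff h(x) = f(Ax + b) + ℓ(x) for some A ∈ GL(3,F_2), b ∈ F_2^3, and affine function ℓ (degree at most 1), is exactly 3. Equivalently, the cosets of the Reed–Muller code R(1,3) fall into exactly 3 classes under AGL(3,2). -/

import Mathlib

/-- `R(r,n)`: the `F₂`-subspace of Boolean functions of algebraic degree at most `r`. -/
def ReedMuller (n r : ℕ) : Submodule (ZMod 2) ((Fin n → ZMod 2) → ZMod 2) :=
  Submodule.span (ZMod 2)
    {f | ∃ I : Finset (Fin n), I.card ≤ r ∧ f = fun x => ∏ i ∈ I, x i}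

abbrev V := Fin 3 → ZMod 2
abbrev F := V → ZMod 2

lemma one_mem' : (fun _ : V => (1 : ZMod 2)) ∈ ReedMuller 3 1 :=
  Submodule.subset_span ⟨∅, by simp, by funext x; simp⟩

lemma coord_mem (i : Fin 3) : (fun x : V => x i) ∈ ReedMuller 3 1 :=
  Submodule.subset_span ⟨{i}, by simp, by funext x; simp⟩

lemma affine_mem (c : ZMod 2) (a : V) :
    (fun x : V => c + ∑ i, a i * x i) ∈ ReedMuller 3 1 := by
  have h1 : (fun x : V => c + ∑ i, a i * x i)
      = c • (fun _ : V => (1 : ZMod 2)) + ∑ i : Fin 3, a i • (fun x : V => x i) := by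
    funext x
    simp [Finset.sum_apply]
  rw [h1]
  exact Submodule.add_mem _ (Submodule.smul_mem _ _ one_mem')
    (Submodule.sum_mem _ fun i _ => Submodule.smul_mem _ _ (coord_mem i))

def T (f : F) : ZMod 2 := ∑ x : V, f x
def S (f : F) : ZMod 2 := f ![0,0,0] + f ![1,0,0] + f ![0,1,0] + f ![1,1,0]

set_option maxRecDepth 100000 in
lemma T_gen : ∀ I : Finset (Fin 3), I.card ≤ 1 → T (fun x => ∏ i ∈ I, x i) = 0 := by decide

set_option maxRecDepth 100000 in
lemma S_gen : ∀ I : Finset (Fin 3), I.card ≤ 1 → S (fun x => ∏ i ∈ I, x i) = 0 := by decide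

lemma T_RM : ∀ l ∈ ReedMuller 3 1, T l = 0 := by
  intro l hl
  induction hl using Submodule.span_induction with
  | mem f hf => obtain ⟨I, hI, rfl⟩ := hf; exact T_gen I hI
  | zero => simp [T]
  | add f g _ _ hf hg => simp only [T, Pi.add_apply, Finset.sum_add_distrib] at *; rw [hf, hg, add_zero]
  | smul a f _ hf => simp only [T, Pi.smul_apply, smul_eq_mul, ← Finset.mul_sum] at *; rw [hf, mul_zero]

lemma S_RM : ∀ l ∈ ReedMuller 3 1, S l = 0 := by
  intro l hl
  induction hl using Submodule.span_induction with
  | mem f hf => obtain ⟨I, hI, rfl⟩ := hf; exact S_gen I hI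
  | zero => simp [S]
  | add f g _ _ hf hg => simp only [S, Pi.add_apply] at *; rw [show ∀ a b c d e f g h : ZMod 2, a+b+(c+d)+(e+f)+(g+h) = (a+c+e+g)+(b+d+f+h) by intros; ring, hf, hg, add_zero]
  | smul a f _ hf => simp only [S, Pi.smul_apply, smul_eq_mul] at *; rw [show ∀ a b c d e : ZMod 2, a*b+a*c+a*d+a*e = a*(b+c+d+e) by intros; ring, hf, mul_zero]

lemma comp_mem (M : Matrix (Fin 3) (Fin 3) (ZMod 2)) (b : V) :
    ∀ l ∈ ReedMuller 3 1, (fun x : V => l (M.mulVec x + b)) ∈ ReedMuller 3 1 := by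
  intro l hl
  induction hl using Submodule.span_induction with
  | mem f hf =>
      obtain ⟨I, hI, rfl⟩ := hf
      rcases I.eq_empty_or_nonempty with rfl | hne
      · simpa using one_mem'
      · obtain ⟨i, rfl⟩ := Finset.card_eq_one.mp (le_antisymm hI hne.card_pos)
        have : (fun x : V => ∏ j ∈ {i}, (M.mulVec x + b) j)
            = fun x : V => b i + ∑ j, M i j * x j := by
          funext x
          simp [Matrix.mulVec, dotProduct, add_comm]
        rw [this]
        exact affine_mem (b i) (fun j => M i j)
  | zero => exact Submodule.zero_mem _
  | add f g _ _ hf hg =>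
      have : (fun x : V => (f + g) (M.mulVec x + b))
          = (fun x : V => f (M.mulVec x + b)) + fun x : V => g (M.mulVec x + b) := rfl
      rw [this]; exact Submodule.add_mem _ hf hg
  | smul a f _ hf =>
      have : (fun x : V => (a • f) (M.mulVec x + b))
          = a • fun x : V => f (M.mulVec x + b) := rfl
      rw [this]; exact Submodule.smul_mem _ _ hf

def BRel (f h : F) : Prop :=
  ∃ (A : GL (Fin 3) (ZMod 2)) (b : Fin 3 → ZMod 2)
    (l : (Fin 3 → ZMod 2) → ZMod 2), l ∈ ReedMuller 3 1 ∧
      ∀ x, h x = f ((A : Matrix (Fin 3) (Fin 3) (ZMod 2)).mulVec x + b) + l x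

lemma vadd_self (b : V) : b + b = 0 := by
  funext i; simp [CharTwo.add_self_eq_zero]

lemma cancel (A : GL (Fin 3) (ZMod 2)) (b x : V) :
    (A : Matrix (Fin 3) (Fin 3) (ZMod 2)).mulVec
      ((↑A⁻¹ : Matrix (Fin 3) (Fin 3) (ZMod 2)).mulVec x
        + (↑A⁻¹ : Matrix (Fin 3) (Fin 3) (ZMod 2)).mulVec b) + b = x := by
  rw [← Matrix.mulVec_add, Matrix.mulVec_mulVec]
  have : (A : Matrix (Fin 3) (Fin 3) (ZMod 2)) * (↑A⁻¹ : Matrix (Fin 3) (Fin 3) (ZMod 2)) = 1 := by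
    exact_mod_cast A.mul_inv
  rw [this, Matrix.one_mulVec, add_assoc, vadd_self, add_zero]

lemma cancel' (A : GL (Fin 3) (ZMod 2)) (b x : V) :
    (↑A⁻¹ : Matrix (Fin 3) (Fin 3) (ZMod 2)).mulVec
      ((A : Matrix (Fin 3) (Fin 3) (ZMod 2)).mulVec x + b)
      + (↑A⁻¹ : Matrix (Fin 3) (Fin 3) (ZMod 2)).mulVec b = x := by
  rw [← Matrix.mulVec_add, add_assoc, vadd_self, add_zero, Matrix.mulVec_mulVec]
  have : (↑A⁻¹ : Matrix (Fin 3) (Fin 3) (ZMod 2)) * (A : Matrix (Fin 3) (Fin 3) (ZMod 2)) = 1 := by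
    exact_mod_cast A.inv_mul
  rw [this, Matrix.one_mulVec]

lemma BRel.symm {f h : F} (hR : BRel f h) : BRel h f := by
  obtain ⟨A, b, l, hl, hx⟩ := hR
  refine ⟨A⁻¹, (↑A⁻¹ : Matrix (Fin 3) (Fin 3) (ZMod 2)).mulVec b,
    fun x => l ((↑A⁻¹ : Matrix (Fin 3) (Fin 3) (ZMod 2)).mulVec x
      + (↑A⁻¹ : Matrix (Fin 3) (Fin 3) (ZMod 2)).mulVec b),
    comp_mem _ _ l hl, fun x => ?_⟩
  have := hx ((↑A⁻¹ : Matrix (Fin 3) (Fin 3) (ZMod 2)).mulVec x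
      + (↑A⁻¹ : Matrix (Fin 3) (Fin 3) (ZMod 2)).mulVec b)
  rw [cancel] at this
  rw [this, add_assoc, CharTwo.add_self_eq_zero, add_zero]

noncomputable def affEquiv (A : GL (Fin 3) (ZMod 2)) (b : V) : Equiv.Perm V :=
  { toFun := fun x => (A : Matrix (Fin 3) (Fin 3) (ZMod 2)).mulVec x + b
    invFun := fun x => (↑A⁻¹ : Matrix (Fin 3) (Fin 3) (ZMod 2)).mulVec x
      + (↑A⁻¹ : Matrix (Fin 3) (Fin 3) (ZMod 2)).mulVec b
    left_inv := fun x => cancel' A b x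
    right_inv := fun x => cancel A b x }

lemma T_comp (f : F) (A : GL (Fin 3) (ZMod 2)) (b : V) :
    T (fun x => f ((A : Matrix (Fin 3) (Fin 3) (ZMod 2)).mulVec x + b)) = T f := by
  unfold T
  exact Fintype.sum_bijective _ (affEquiv A b).bijective _ _ (fun x => rfl)

lemma T_eq {f h : F} (hR : BRel f h) : T f = T h := by
  obtain ⟨A, b, l, hl, hx⟩ := hR
  have h1 : T h = T (fun x => f ((A : Matrix (Fin 3) (Fin 3) (ZMod 2)).mulVec x + b)) + T l := by
    unfold T
    rw [← Finset.sum_add_distrib]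
    exact Finset.sum_congr rfl fun x _ => hx x
  rw [h1, T_RM l hl, add_zero, T_comp]

lemma mem_iff {f h : F} (hR : BRel f h) : f ∈ ReedMuller 3 1 ↔ h ∈ ReedMuller 3 1 := by
  constructor
  · intro hf
    obtain ⟨A, b, l, hl, hx⟩ := hR
    have : h = (fun x : V => f ((A : Matrix (Fin 3) (Fin 3) (ZMod 2)).mulVec x + b)) + l := by
      funext x; exact hx x
    rw [this]
    exact Submodule.add_mem _ (comp_mem _ _ f hf) hl
  · intro hh
    obtain ⟨A, b, l, hl, hx⟩ := hR.symm
    have : f = (fun x : V => h ((A : Matrix (Fin 3) (Fin 3) (ZMod 2)).mulVec x + b)) + l := by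
      funext x; exact hx x
    rw [this]
    exact Submodule.add_mem _ (comp_mem _ _ h hh) hl

def pt : Fin 8 → V := ![![0,0,0], ![1,0,0], ![0,1,0], ![1,1,0], ![0,0,1], ![1,0,1], ![0,1,1], ![1,1,1]]

def idx (x : V) : Fin 8 :=
  ⟨(x 0).val + 2*(x 1).val + 4*(x 2).val, by
    have h0 := ZMod.val_lt (x 0); have h1 := ZMod.val_lt (x 1); have h2 := ZMod.val_lt (x 2); omega⟩

set_option maxRecDepth 100000 in
theorem pt_idx : ∀ x : V, pt (idx x) = x := by decide

theorem f_eq (f : F) : f = fun y => (f ∘ pt) (idx y) := by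
  funext y; simp [pt_idx y]

def a0 (f : F) : ZMod 2 := f ![0,0,0]
def a1 (f : F) : ZMod 2 := f ![1,0,0] + f ![0,0,0]
def a2 (f : F) : ZMod 2 := f ![0,1,0] + f ![0,0,0]
def a3 (f : F) : ZMod 2 := f ![0,0,1] + f ![0,0,0]
def b12 (f : F) : ZMod 2 := f ![1,1,0] + f ![1,0,0] + f ![0,1,0] + f ![0,0,0]
def b13 (f : F) : ZMod 2 := f ![1,0,1] + f ![1,0,0] + f ![0,0,1] + f ![0,0,0]
def b23 (f : F) : ZMod 2 := f ![0,1,1] + f ![0,1,0] + f ![0,0,1] + f ![0,0,0]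
def b123 (f : F) : ZMod 2 := f ![1,1,1] + f ![1,1,0] + f ![1,0,1] + f ![0,1,1] + f ![1,0,0] + f ![0,1,0] + f ![0,0,1] + f ![0,0,0]

def ANFeq (f : F) : Prop := ∀ x : V, f x =
    (a0 f + (a1 f * x 0 + a2 f * x 1 + a3 f * x 2))
    + (b12 f * (x 0 * x 1) + b13 f * (x 0 * x 2) + b23 f * (x 1 * x 2) + b123 f * (x 0 * x 1 * x 2))

instance (f : F) : Decidable (ANFeq f) := by unfold ANFeq; infer_instance

set_option maxRecDepth 1000000 in
theorem anf' : ∀ (g : Fin 8 → ZMod 2), ANFeq (fun y => g (idx y)) := by decide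

theorem anf (f : F) : ANFeq f := by
  have h := anf' (f ∘ pt)
  rw [f_eq f]; exact h

def f0 : F := fun _ => 0
def f2 : F := fun x => x 0 * x 1
def f3 : F := fun x => x 0 * x 1 * x 2

lemma quad_case (M M' : Matrix (Fin 3) (Fin 3) (ZMod 2)) (h1 : M * M' = 1) (h2 : M' * M = 1)
    (b : V) (c : ZMod 2) (a : V) (g tgt : F)
    (hpt : ∀ x : V, g x = tgt (M.mulVec x + b) + (c + ∑ i, a i * x i)) :
    Quot.mk BRel g = Quot.mk BRel tgt :=
  (Quot.sound ⟨⟨M, M', h1, h2⟩, b, fun x => c + ∑ i, a i * x i, affine_mem c a, hpt⟩).symm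

lemma two_cases : ∀ u : ZMod 2, u = 0 ∨ u = 1 := by decide

lemma to_quad (f : F) : Quot.mk BRel f = Quot.mk BRel
    (fun x : V => b12 f * (x 0 * x 1) + b13 f * (x 0 * x 2) + b23 f * (x 1 * x 2)
      + b123 f * (x 0 * x 1 * x 2)) := by
  symm
  apply Quot.sound
  refine ⟨1, 0, fun x => a0 f + ∑ i, ![a1 f, a2 f, a3 f] i * x i, affine_mem _ _, fun x => ?_⟩
  have hA : ((1 : GL (Fin 3) (ZMod 2)) : Matrix (Fin 3) (Fin 3) (ZMod 2)) = 1 := Units.val_one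
  rw [hA, Matrix.one_mulVec, add_zero]
  have h := anf f x
  rw [h]
  simp only [Fin.sum_univ_three, Matrix.cons_val_zero, Matrix.cons_val_one, Matrix.head_cons,
    Matrix.cons_val_two, Matrix.tail_cons]
  ring

set_option maxRecDepth 100000 in
lemma step2 (p q r s : ZMod 2) :
    Quot.mk BRel (fun x : V => p * (x 0 * x 1) + q * (x 0 * x 2) + r * (x 1 * x 2)
        + s * (x 0 * x 1 * x 2)) = Quot.mk BRel f0 ∨
      Quot.mk BRel (fun x : V => p * (x 0 * x 1) + q * (x 0 * x 2) + r * (x 1 * x 2)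
        + s * (x 0 * x 1 * x 2)) = Quot.mk BRel f2 ∨
      Quot.mk BRel (fun x : V => p * (x 0 * x 1) + q * (x 0 * x 2) + r * (x 1 * x 2)
        + s * (x 0 * x 1 * x 2)) = Quot.mk BRel f3 := by
  rcases two_cases p with rfl | rfl <;> rcases two_cases q with rfl | rfl <;>
    rcases two_cases r with rfl | rfl <;> rcases two_cases s with rfl | rfl
  · exact Or.inl (quad_case !![1,0,0;0,1,0;0,0,1] !![1,0,0;0,1,0;0,0,1] (by decide) (by decide) ![0,0,0] 0 ![0,0,0] _ _ (by decide))
  · exact Or.inr (Or.inr (quad_case !![0,0,1;0,1,0;1,0,0] !![0,0,1;0,1,0;1,0,0] (by decide) (by decide) ![0,0,0] 0 ![0,0,0] _ _ (by decide)))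
  · exact Or.inr (Or.inl (quad_case !![0,0,1;0,1,0;1,0,0] !![0,0,1;0,1,0;1,0,0] (by decide) (by decide) ![0,0,0] 0 ![0,0,0] _ _ (by decide)))
  · exact Or.inr (Or.inr (quad_case !![0,0,1;0,1,0;1,0,0] !![0,0,1;0,1,0;1,0,0] (by decide) (by decide) ![0,0,1] 0 ![0,0,0] _ _ (by decide)))
  · exact Or.inr (Or.inl (quad_case !![0,0,1;1,0,0;0,1,0] !![0,1,0;0,0,1;1,0,0] (by decide) (by decide) ![0,0,0] 0 ![0,0,0] _ _ (by decide)))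
  · exact Or.inr (Or.inr (quad_case !![0,0,1;0,1,0;1,0,0] !![0,0,1;0,1,0;1,0,0] (by decide) (by decide) ![0,1,0] 0 ![0,0,0] _ _ (by decide)))
  · exact Or.inr (Or.inl (quad_case !![0,0,1;1,1,0;1,0,0] !![0,0,1;0,1,1;1,0,0] (by decide) (by decide) ![0,0,0] 0 ![0,0,0] _ _ (by decide)))
  · exact Or.inr (Or.inr (quad_case !![0,0,1;0,1,0;1,0,0] !![0,0,1;0,1,0;1,0,0] (by decide) (by decide) ![0,1,1] 0 ![0,0,1] _ _ (by decide)))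
  · exact Or.inr (Or.inl (quad_case !![0,1,0;1,0,0;0,0,1] !![0,1,0;1,0,0;0,0,1] (by decide) (by decide) ![0,0,0] 0 ![0,0,0] _ _ (by decide)))
  · exact Or.inr (Or.inr (quad_case !![0,0,1;0,1,0;1,0,0] !![0,0,1;0,1,0;1,0,0] (by decide) (by decide) ![1,0,0] 0 ![0,0,0] _ _ (by decide)))
  · exact Or.inr (Or.inl (quad_case !![1,0,1;0,1,0;1,0,0] !![0,0,1;0,1,0;1,0,1] (by decide) (by decide) ![0,0,0] 0 ![0,0,0] _ _ (by decide)))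
  · exact Or.inr (Or.inr (quad_case !![0,0,1;0,1,0;1,0,0] !![0,0,1;0,1,0;1,0,0] (by decide) (by decide) ![1,0,1] 0 ![0,1,0] _ _ (by decide)))
  · exact Or.inr (Or.inl (quad_case !![0,1,1;1,0,0;0,1,0] !![0,1,0;0,0,1;1,0,1] (by decide) (by decide) ![0,0,0] 0 ![0,0,0] _ _ (by decide)))
  · exact Or.inr (Or.inr (quad_case !![0,0,1;0,1,0;1,0,0] !![0,0,1;0,1,0;1,0,0] (by decide) (by decide) ![1,1,0] 0 ![1,0,0] _ _ (by decide)))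
  · exact Or.inr (Or.inl (quad_case !![1,0,1;1,1,0;1,0,0] !![0,0,1;0,1,1;1,0,1] (by decide) (by decide) ![0,0,0] 0 ![1,0,0] _ _ (by decide)))
  · exact Or.inr (Or.inr (quad_case !![0,0,1;0,1,0;1,0,0] !![0,0,1;0,1,0;1,0,0] (by decide) (by decide) ![1,1,1] 1 ![1,1,1] _ _ (by decide)))

lemma classify (f : F) : Quot.mk BRel f = Quot.mk BRel f0 ∨
    Quot.mk BRel f = Quot.mk BRel f2 ∨ Quot.mk BRel f = Quot.mk BRel f3 := by
  rw [to_quad f]; exact step2 _ _ _ _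

open Classical in
noncomputable def CC (f : F) : Fin 3 :=
  if f ∈ ReedMuller 3 1 then 0 else if T f = 0 then 1 else 2

lemma CC_inv {f h : F} (hR : BRel f h) : CC f = CC h := by
  unfold CC
  by_cases hm : f ∈ ReedMuller 3 1
  · rw [if_pos hm, if_pos ((mem_iff hR).mp hm)]
  · rw [if_neg hm, if_neg (fun hh => hm ((mem_iff hR).mpr hh)), T_eq hR]

lemma T_f2 : T f2 = 0 := by decide
lemma T_f3 : T f3 = 1 := by decide
lemma S_f2 : S f2 = 1 := by decide

lemma f0_mem : f0 ∈ ReedMuller 3 1 := by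
  have : f0 = (0 : F) := rfl
  rw [this]; exact Submodule.zero_mem _

lemma f2_not : f2 ∉ ReedMuller 3 1 := fun h => by
  have := S_RM f2 h; rw [S_f2] at this; exact one_ne_zero this

lemma f3_not : f3 ∉ ReedMuller 3 1 := fun h => by
  have := T_RM f3 h; rw [T_f3] at this; exact one_ne_zero this

lemma CC_f0 : CC f0 = 0 := by rw [CC, if_pos f0_mem]
lemma CC_f2 : CC f2 = 1 := by rw [CC, if_neg f2_not, if_pos T_f2]
lemma CC_f3 : CC f3 = 2 := by
  rw [CC, if_neg f3_not, if_neg (by rw [T_f3]; exact one_ne_zero)]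

/-- There are exactly 3 equivalence classes of 3-variable Boolean functions under
`f ~ h` iff `h(x) = f(Ax + b) + ℓ(x)` for some `A ∈ GL(3,F₂)`, `b ∈ F₂³` and affine
`ℓ` (degree ≤ 1); equivalently, the cosets of the Reed–Muller code `R(1,3)` fall
into exactly 3 classes under `AGL(3,2)`. -/
theorem card_classes_R13 :
    Nat.card (Quot (fun f h : (Fin 3 → ZMod 2) → ZMod 2 =>
      ∃ (A : GL (Fin 3) (ZMod 2)) (b : Fin 3 → ZMod 2)
        (l : (Fin 3 → ZMod 2) → ZMod 2), l ∈ ReedMuller 3 1 ∧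
          ∀ x, h x = f ((A : Matrix (Fin 3) (Fin 3) (ZMod 2)).mulVec x + b) + l x)) = 3 := by
  show Nat.card (Quot BRel) = 3
  let φ : Quot BRel → Fin 3 := Quot.lift CC (fun f h hR => CC_inv hR)
  have canon : ∀ f : F, Quot.mk BRel f = (![Quot.mk BRel f0, Quot.mk BRel f2, Quot.mk BRel f3] : Fin 3 → Quot BRel) (CC f) := by
    intro f
    rcases classify f with h | h | h
    · have e : CC f = CC f0 := congrArg φ h
      rw [h, e, CC_f0]; rfl
    · have e : CC f = CC f2 := congrArg φ h
      rw [h, e, CC_f2]; rfl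
    · have e : CC f = CC f3 := congrArg φ h
      rw [h, e, CC_f3]; rfl
  have hb : Function.Bijective φ := by
    constructor
    · intro q1 q2
      induction q1 using Quot.ind with | _ f => ?_
      induction q2 using Quot.ind with | _ g => ?_
      intro hfg
      have hfg' : CC f = CC g := hfg
      rw [canon f, canon g, hfg']
    · intro v
      fin_cases v
      · exact ⟨Quot.mk BRel f0, CC_f0⟩
      · exact ⟨Quot.mk BRel f2, CC_f2⟩
      · exact ⟨Quot.mk BRel f3, CC_f3⟩
  rw [Nat.card_eq_of_bijective φ hb, Nat.card_eq_fintype_card, Fintype.card_fin]
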